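/- Let 𝔸 = ℂ⟨x_1,…,x_m⟩ be the free associative ℂ-algebra on m generators and let F ∈ 𝔸 be multilinear, i.e., F is a ℂ-linear combination of the words x_{σ(1)}·x_{σ(2)}·⋯·x_{σ(m)} with σ ∈ S_m (each generator appears exactly once in every monomial of F). If for every n ≥ 1 and all matrices X_1,…,X_m ∈ M_n(ℂ) one has Trace(F(X_1,…,X_m)) = 0, then F ∈ [𝔸,𝔸], the ℂ-linear span of commutators a·b − b·a with a, b ∈ 𝔸. (The multilinear claim established in the proof of Proposition 4.1 of the paper.) -/

import Mathlib

/- STATEMENT 15 (multilinear claim in the proof of Proposition 4.1 of the paper):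
Let 𝔸 = ℂ⟨x_1,…,x_m⟩ and let F ∈ 𝔸 be multilinear, i.e. a ℂ-linear combination of the
words x_{σ(1)}⋯x_{σ(m)}, σ ∈ S_m. If Trace(F(X_1,…,X_m)) = 0 for every n ≥ 1 and all
X_1,…,X_m ∈ M_n(ℂ), then F ∈ [𝔸,𝔸].

𝔸 = ℂ⟨x_1,…,x_m⟩ is modelled as `FreeAlgebra ℂ (Fin m)`. -/

noncomputable section

/-- `[𝔸,𝔸]`: the ℂ-linear span of all commutators in `𝔸 = ℂ⟨x_1,…,x_m⟩`. -/
def commSpan (m : ℕ) : Submodule ℂ (FreeAlgebra ℂ (Fin m)) :=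
  Submodule.span ℂ {z | ∃ a b : FreeAlgebra ℂ (Fin m), z = a * b - b * a}

namespace GMTI

open Matrix

abbrev E {n : ℕ} (a b : Fin n) : Matrix (Fin n) (Fin n) ℂ :=
  Matrix.single a b 1

def wd {m : ℕ} (σ : Equiv.Perm (Fin m)) : FreeAlgebra ℂ (Fin m) :=
  (List.ofFn fun i : Fin m => FreeAlgebra.ι ℂ (σ i)).prod

lemma prodE : ∀ (k n : ℕ) (f g : Fin (k+1) → Fin n),
    (List.ofFn fun i => E (f i) (g i)).prod =
      if ∀ i : Fin k, g i.castSucc = f i.succ then E (f 0) (g (Fin.last k)) else 0 := by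
  intro k
  induction k with
  | zero =>
    intro n f g
    rw [if_pos (fun i => i.elim0)]
    simp only [List.ofFn_succ, List.ofFn_zero, List.prod_cons, List.prod_nil, mul_one]
    rfl
  | succ k ih =>
    intro n f g
    rw [List.ofFn_succ]
    simp only [List.prod_cons, Function.comp]
    rw [ih n (fun i => f i.succ) (fun i => g i.succ)]
    have hsplit : (∀ i : Fin (k+1), g i.castSucc = f i.succ) ↔
        (g 0 = f 1 ∧ ∀ i : Fin k, g i.castSucc.succ = f i.succ.succ) := by
      rw [Fin.forall_fin_succ]
      simp [← Fin.succ_castSucc]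
    by_cases hr : ∀ i : Fin k, g i.castSucc.succ = f i.succ.succ
    · rw [if_pos hr]
      by_cases h0 : g 0 = f 1
      · rw [if_pos (hsplit.mpr ⟨h0, hr⟩)]
        have h1 : f (Fin.succ 0) = g 0 := by rw [Fin.succ_zero_eq_one, ← h0]
        rw [h1, Matrix.single_mul_single_same, one_mul, Fin.succ_last]
      · rw [if_neg (fun hc => h0 (hsplit.mp hc).1)]
        have h1 : g 0 ≠ f (Fin.succ 0) := by rw [Fin.succ_zero_eq_one]; exact h0
        rw [Matrix.single_mul_single_of_ne (h := h1)]
    · rw [if_neg hr, mul_zero, if_neg (fun hc => hr (hsplit.mp hc).2)]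

-- chain lemma
lemma chainEq {k : ℕ} (π : Fin (k+1) → Fin (k+1))
    (hc : ∀ i : Fin k, π i.castSucc + 1 = π i.succ) :
    ∀ i : Fin (k+1), π i = π 0 + i := by
  intro i
  induction i using Fin.induction with
  | zero => simp
  | succ i ihc =>
    rw [← hc i, ihc, add_assoc, Fin.coeSucc_eq_succ]

lemma chain_iff {k : ℕ} (τ σ : Equiv.Perm (Fin (k+1))) :
    (∀ i : Fin k, (τ⁻¹ * σ) i.castSucc + 1 = (τ⁻¹ * σ) i.succ) ↔
      ∃ j : Fin (k+1), σ = τ * Equiv.addLeft j := by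
  constructor
  · intro hc
    refine ⟨(τ⁻¹ * σ) 0, ?_⟩
    have hπ : (τ⁻¹ * σ) = Equiv.addLeft ((τ⁻¹ * σ) 0) := by
      apply Equiv.ext
      intro i
      exact chainEq _ hc i
    calc σ = τ * (τ⁻¹ * σ) := by group
      _ = τ * Equiv.addLeft ((τ⁻¹ * σ) 0) := by rw [← hπ]
  · rintro ⟨j, rfl⟩
    intro i
    have : τ⁻¹ * (τ * Equiv.addLeft j) = Equiv.addLeft j := by group
    rw [this]
    show (j + i.castSucc) + 1 = j + i.succ
    rw [add_assoc, Fin.coeSucc_eq_succ]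


lemma rot_one {k : ℕ} (σ : Equiv.Perm (Fin (k+1))) :
    wd (σ * Equiv.addLeft (1 : Fin (k+1))) - wd σ ∈ commSpan (k+1) := by
  set b := (List.ofFn fun j : Fin k => FreeAlgebra.ι ℂ (σ j.succ)).prod with hb
  set a := FreeAlgebra.ι ℂ (σ 0) with ha
  have h1 : wd (σ * Equiv.addLeft (1 : Fin (k+1))) = b * a := by
    have hlist : (List.ofFn fun i : Fin (k+1) => FreeAlgebra.ι ℂ ((σ * Equiv.addLeft (1 : Fin (k+1))) i)) =
        (List.ofFn fun j : Fin k => FreeAlgebra.ι ℂ (σ j.succ)).concat (FreeAlgebra.ι ℂ (σ 0)) := by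
      rw [List.ofFn_succ']
      have e1 : (fun i : Fin k => FreeAlgebra.ι ℂ ((σ * Equiv.addLeft (1 : Fin (k+1))) i.castSucc)) =
          fun j : Fin k => FreeAlgebra.ι ℂ (σ j.succ) := by
        funext i
        have : (1 : Fin (k+1)) + i.castSucc = i.succ := by rw [add_comm (1 : Fin (k+1)) i.castSucc, Fin.coeSucc_eq_succ]
        exact congrArg (fun t => FreeAlgebra.ι ℂ (σ t)) this
      have e2 : (σ * Equiv.addLeft (1 : Fin (k+1))) (Fin.last k) = σ 0 := by
        have : (1 : Fin (k+1)) + Fin.last k = 0 := by rw [add_comm (1 : Fin (k+1)) (Fin.last k), Fin.last_add_one]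
        exact congrArg (fun t => σ t) this
      rw [e1, e2]
    rw [wd, hlist, List.concat_eq_append, List.prod_append, List.prod_cons, List.prod_nil, mul_one]
  have h2 : wd σ = a * b := by
    rw [wd, List.ofFn_succ, List.prod_cons]
  rw [h1, h2]
  exact Submodule.subset_span ⟨b, a, rfl⟩

open Fin.CommRing in
lemma rot_mem {k : ℕ} (σ : Equiv.Perm (Fin (k+1))) (j : Fin (k+1)) :
    wd (σ * Equiv.addLeft j) - wd σ ∈ commSpan (k+1) := by
  have key : ∀ c : ℕ, ∀ σ : Equiv.Perm (Fin (k+1)),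
      wd (σ * Equiv.addLeft (c : Fin (k+1))) - wd σ ∈ commSpan (k+1) := by
    intro c
    induction c with
    | zero => intro σ; simp
    | succ c ih =>
      intro σ
      have hadd : (Equiv.addLeft ((c+1 : ℕ) : Fin (k+1)) : Equiv.Perm (Fin (k+1))) =
          Equiv.addLeft ((c : ℕ) : Fin (k+1)) * Equiv.addLeft 1 := by
        apply Equiv.ext
        intro i
        show ((c+1 : ℕ) : Fin (k+1)) + i = ((c : ℕ) : Fin (k+1)) + (1 + i)
        push_cast
        ring
      rw [hadd, ← mul_assoc]
      have := rot_one (σ * Equiv.addLeft ((c : ℕ) : Fin (k+1)))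
      have h2 := ih σ
      have := Submodule.add_mem _ this h2
      simpa using this
  have := key (j : ℕ) σ
  rwa [Fin.cast_val_eq_self] at this


lemma lift_wd {m n : ℕ} (Xs : Fin m → Matrix (Fin n) (Fin n) ℂ) (σ : Equiv.Perm (Fin m)) :
    FreeAlgebra.lift ℂ Xs (wd σ) = (List.ofFn fun i => Xs (σ i)).prod := by
  rw [wd, map_list_prod, List.map_ofFn]
  exact congrArg List.prod (congrArg List.ofFn (funext fun i => by
    simp [Function.comp, FreeAlgebra.lift_ι_apply]))

-- the key claim: cyclic class sums of coefficients vanish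
lemma claimS {k : ℕ} (c : Equiv.Perm (Fin (k+1)) → ℂ)
    (h : ∀ Xs : Fin (k+1) → Matrix (Fin (k+1)) (Fin (k+1)) ℂ,
      Matrix.trace (FreeAlgebra.lift ℂ Xs (∑ σ, c σ • wd σ)) = 0)
    (τ : Equiv.Perm (Fin (k+1))) :
    ∑ j : Fin (k+1), c (τ * Equiv.addLeft j) = 0 := by
  have h0 := h (fun x => E (τ⁻¹ x) (τ⁻¹ x + 1))
  rw [map_sum, Matrix.trace_sum] at h0
  have hterm : ∀ σ : Equiv.Perm (Fin (k+1)),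
      Matrix.trace (FreeAlgebra.lift ℂ (fun x => E (τ⁻¹ x) (τ⁻¹ x + 1)) (c σ • wd σ)) =
        if ∃ j : Fin (k+1), σ = τ * Equiv.addLeft j then c σ else 0 := by
    intro σ
    rw [_root_.map_smul, Matrix.trace_smul]
    have hl : FreeAlgebra.lift ℂ (fun x => E (τ⁻¹ x) (τ⁻¹ x + 1)) (wd σ) =
        (List.ofFn fun i => E ((τ⁻¹ * σ) i) ((τ⁻¹ * σ) i + 1)).prod := lift_wd _ σ
    rw [hl, prodE k (k+1) (fun i => (τ⁻¹ * σ) i) (fun i => (τ⁻¹ * σ) i + 1)]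
    by_cases hc : ∀ i : Fin k, (τ⁻¹ * σ) i.castSucc + 1 = (τ⁻¹ * σ) i.succ
    · rw [if_pos hc, if_pos ((chain_iff τ σ).mp hc)]
      have hlast : (τ⁻¹ * σ) (Fin.last k) + 1 = (τ⁻¹ * σ) 0 := by
        rw [chainEq _ hc (Fin.last k), add_assoc, Fin.last_add_one, add_zero]
      rw [hlast, Matrix.trace_single_eq_same, smul_eq_mul, mul_one]
    · rw [if_neg hc, if_neg (fun hj => hc ((chain_iff τ σ).mpr hj)), Matrix.trace_zero,
        smul_zero]
  rw [Finset.sum_congr rfl (fun σ _ => hterm σ)] at h0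
  -- now h0 : ∑ σ, (if ∃ j, σ = τ * addLeft j then c σ else 0) = 0
  set s : Finset (Equiv.Perm (Fin (k+1))) :=
    Finset.univ.image (fun j : Fin (k+1) => τ * Equiv.addLeft j) with hs
  rw [← Finset.sum_subset (Finset.subset_univ s)
    (fun σ _ hσ => if_neg (fun hj => hσ (by
      obtain ⟨j, hj⟩ := hj
      simp only [hs, Finset.mem_image, Finset.mem_univ, true_and]
      exact ⟨j, hj.symm⟩)))] at h0
  rw [Finset.sum_ite_of_true (fun σ hσ => by
      simp only [hs, Finset.mem_image, Finset.mem_univ, true_and] at hσ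
      obtain ⟨j, hj⟩ := hσ
      exact ⟨j, hj.symm⟩)] at h0
  rw [Finset.sum_image (fun j _ j' _ hjj => by
      have := congrArg (fun π => (τ⁻¹ * π) 0) hjj
      simpa [mul_assoc] using this)] at h0
  exact h0


end GMTI

open GMTI in
theorem ginzburg_multilinear_trace_identity (m : ℕ) (F : FreeAlgebra ℂ (Fin m))
    -- F is multilinear: a ℂ-linear combination of the words x_{σ(1)}·x_{σ(2)}·⋯·x_{σ(m)}:
    (hF : F ∈ Submodule.span ℂ
      {g : FreeAlgebra ℂ (Fin m) | ∃ σ : Equiv.Perm (Fin m),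
        g = (List.ofFn fun i : Fin m => FreeAlgebra.ι ℂ (σ i)).prod})
    -- the trace of F vanishes identically on matrices of every size n ≥ 1:
    (h : ∀ n : ℕ, 1 ≤ n → ∀ Xs : Fin m → Matrix (Fin n) (Fin n) ℂ,
      Matrix.trace (FreeAlgebra.lift ℂ Xs F) = 0) :
    F ∈ commSpan m := by
  obtain _ | k := m
  · -- m = 0 : F is a scalar, and the trace condition forces it to vanish
    have hset : {g : FreeAlgebra ℂ (Fin 0) | ∃ σ : Equiv.Perm (Fin 0),
        g = (List.ofFn fun i : Fin 0 => FreeAlgebra.ι ℂ (σ i)).prod} = Set.range (wd (m := 0)) :=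
      Set.ext fun g => ⟨fun ⟨σ, hσ⟩ => ⟨σ, hσ.symm⟩, fun ⟨σ, hσ⟩ => ⟨σ, hσ.symm⟩⟩
    rw [hset] at hF
    obtain ⟨c, hc⟩ := (Submodule.mem_span_range_iff_exists_fun ℂ).mp hF
    have hwd : ∀ σ : Equiv.Perm (Fin 0), wd σ = 1 := fun σ => by
      simp [wd, List.ofFn_zero]
    have hF1 : F = (∑ σ : Equiv.Perm (Fin 0), c σ) • (1 : FreeAlgebra ℂ (Fin 0)) := by
      rw [← hc, Finset.sum_smul]
      exact Finset.sum_congr rfl fun σ _ => by rw [hwd σ]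
    have h1 := h 1 le_rfl (fun x => x.elim0)
    rw [hF1] at h1
    rw [_root_.map_smul, map_one, Matrix.trace_smul, Matrix.trace_one] at h1
    simp only [Fintype.card_fin, Nat.cast_one, smul_eq_mul, mul_one] at h1
    rw [hF1, h1, zero_smul]
    exact Submodule.zero_mem _
  · -- m = k + 1
    have hset : {g : FreeAlgebra ℂ (Fin (k+1)) | ∃ σ : Equiv.Perm (Fin (k+1)),
        g = (List.ofFn fun i : Fin (k+1) => FreeAlgebra.ι ℂ (σ i)).prod}
        = Set.range (wd (m := k+1)) :=
      Set.ext fun g => ⟨fun ⟨σ, hσ⟩ => ⟨σ, hσ.symm⟩, fun ⟨σ, hσ⟩ => ⟨σ, hσ.symm⟩⟩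
    rw [hset] at hF
    obtain ⟨c, hc⟩ := (Submodule.mem_span_range_iff_exists_fun ℂ).mp hF
    -- the cyclic class sums of the coefficients vanish
    have hS : ∀ τ : Equiv.Perm (Fin (k+1)), ∑ j : Fin (k+1), c (τ * Equiv.addLeft j) = 0 := by
      refine claimS c (fun Xs => ?_)
      rw [hc]
      exact h (k+1) (Nat.succ_le_succ (Nat.zero_le k)) Xs
    set G : FreeAlgebra ℂ (Fin (k+1)) :=
      ∑ j : Fin (k+1), ∑ σ : Equiv.Perm (Fin (k+1)), c σ • wd (σ * Equiv.addLeft j) with hG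
    have hdiff : ((k:ℂ)+1) • F - G ∈ commSpan (k+1) := by
      have e1 : ((k:ℂ)+1) • F - G =
          ∑ j : Fin (k+1), ∑ σ : Equiv.Perm (Fin (k+1)),
            c σ • (wd σ - wd (σ * Equiv.addLeft j)) := by
        have e2 : ((k:ℂ)+1) • F =
            ∑ j : Fin (k+1), ∑ σ : Equiv.Perm (Fin (k+1)), c σ • wd σ := by
          rw [← hc, Finset.sum_const, Finset.card_univ, Fintype.card_fin,
            ← Nat.cast_smul_eq_nsmul ℂ, Nat.cast_add, Nat.cast_one]
        rw [e2, hG, ← Finset.sum_sub_distrib]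
        refine Finset.sum_congr rfl fun j _ => ?_
        rw [← Finset.sum_sub_distrib]
        exact Finset.sum_congr rfl fun σ _ => (smul_sub _ _ _).symm
      rw [e1]
      refine Submodule.sum_mem _ fun j _ => Submodule.sum_mem _ fun σ _ =>
        Submodule.smul_mem _ _ ?_
      have := Submodule.neg_mem _ (rot_mem σ j)
      simpa using this
    have hG0 : G = 0 := by
      rw [hG]
      have e3 : ∀ j : Fin (k+1), ∑ σ : Equiv.Perm (Fin (k+1)), c σ • wd (σ * Equiv.addLeft j) =
          ∑ σ : Equiv.Perm (Fin (k+1)), c (σ * (Equiv.addLeft j)⁻¹) • wd σ := by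
        intro j
        refine Fintype.sum_equiv (Equiv.mulRight (Equiv.addLeft j : Equiv.Perm (Fin (k+1))))
          _ _ fun σ => ?_
        show c σ • wd (σ * Equiv.addLeft j) =
          c (σ * Equiv.addLeft j * (Equiv.addLeft j)⁻¹) • wd (σ * Equiv.addLeft j)
        rw [mul_inv_cancel_right]
      rw [Finset.sum_congr rfl fun j _ => e3 j, Finset.sum_comm,
        Finset.sum_congr rfl fun σ _ => (Finset.sum_smul).symm]
      refine Finset.sum_eq_zero fun σ _ => ?_
      have hinv : ∀ j : Fin (k+1),
          ((Equiv.addLeft j)⁻¹ : Equiv.Perm (Fin (k+1))) = Equiv.addLeft (-j) := by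
        intro j
        apply Equiv.ext
        intro i
        show (Equiv.addLeft j).symm i = -j + i
        rw [Equiv.addLeft_symm]
        rfl
      have e4 : ∑ j : Fin (k+1), c (σ * (Equiv.addLeft j)⁻¹) =
          ∑ j : Fin (k+1), c (σ * Equiv.addLeft j) := by
        refine Fintype.sum_equiv (Equiv.neg (Fin (k+1))) _ _ fun j => ?_
        rw [hinv j]
        rfl
      rw [e4, hS σ, zero_smul]
    have hmem : ((k:ℂ)+1) • F ∈ commSpan (k+1) := by
      have := hdiff
      rw [hG0, sub_zero] at this
      exact this
    have hm0 : ((k:ℂ)+1) ≠ 0 := by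
      exact_mod_cast Nat.succ_ne_zero k
    have hFr : F = ((k:ℂ)+1)⁻¹ • (((k:ℂ)+1) • F) := by
      rw [smul_smul, inv_mul_cancel₀ hm0, one_smul]
    rw [hFr]
    exact Submodule.smul_mem _ _ hmem

end
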